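/- Let c₁, c₂ ∈ ℝ, h : I → ℝ a function on an open interval I, and let σ₁, σ₂ : I → ℝ be differentiable and strictly positive functions satisfying σ_i′(t) = −2 · σ_i(t) · c_i · h(t) for i = 1, 2 and all t ∈ I. Then the quantity t ↦ c₂ · log σ₁(t) − c₁ · log σ₂(t) is constant on I; equivalently, σ₁(t)^{c₂} / σ₂(t)^{c₁} is constant on I. (This is the depth-2 case: one singular value grows as a fixed power of the other.) -/

import Mathlib

/-- Conserved quantity for depth 2: if two strictly positive singular values evolve by
`σᵢ′(t) = −2·σᵢ(t)·cᵢ·h(t)` on an open interval `I`, then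
`c₂·log σ₁(t) − c₁·log σ₂(t)` is constant on `I`; equivalently,
`σ₁(t)^c₂ / σ₂(t)^c₁` is constant on `I`. -/
theorem stmt16 (c₁ c₂ : ℝ)
    (I : Set ℝ) (hI_open : IsOpen I) (hI_conn : I.OrdConnected)
    (h : ℝ → ℝ) (σ₁ σ₂ : ℝ → ℝ)
    (hpos₁ : ∀ t ∈ I, 0 < σ₁ t) (hpos₂ : ∀ t ∈ I, 0 < σ₂ t)
    (hd₁ : ∀ t ∈ I, HasDerivAt σ₁ (-(2 : ℝ) * σ₁ t * (c₁ * h t)) t)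
    (hd₂ : ∀ t ∈ I, HasDerivAt σ₂ (-(2 : ℝ) * σ₂ t * (c₂ * h t)) t) :
    (∀ t ∈ I, ∀ t' ∈ I,
      c₂ * Real.log (σ₁ t) - c₁ * Real.log (σ₂ t) =
      c₂ * Real.log (σ₁ t') - c₁ * Real.log (σ₂ t')) ∧
    (∀ t ∈ I, ∀ t' ∈ I,
      σ₁ t ^ c₂ / σ₂ t ^ c₁ = σ₁ t' ^ c₂ / σ₂ t' ^ c₁) := by
  set F : ℝ → ℝ := fun t => c₂ * Real.log (σ₁ t) - c₁ * Real.log (σ₂ t) with hF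
  have hderiv : ∀ t ∈ I, HasDerivAt F 0 t := by
    intro t ht
    have h1 : HasDerivAt (fun t => Real.log (σ₁ t))
        ((-(2 : ℝ) * σ₁ t * (c₁ * h t)) / σ₁ t) t :=
      (hd₁ t ht).log (hpos₁ t ht).ne'
    have h2 : HasDerivAt (fun t => Real.log (σ₂ t))
        ((-(2 : ℝ) * σ₂ t * (c₂ * h t)) / σ₂ t) t :=
      (hd₂ t ht).log (hpos₂ t ht).ne'
    have := ((h1.const_mul c₂).sub (h2.const_mul c₁))
    refine this.congr_deriv ?_
    field_simp [(hpos₁ t ht).ne', (hpos₂ t ht).ne']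
    ring
  have hconv : Convex ℝ I := hI_conn.convex
  have key : ∀ t ∈ I, ∀ t' ∈ I, F t = F t' := by
    intro t ht t' ht'
    apply hconv.is_const_of_fderivWithin_eq_zero
      (fun x hx => ((hderiv x hx).differentiableAt.differentiableWithinAt))
      (fun x hx => ?_) ht ht'
    have := (hderiv x hx).hasFDerivAt.hasFDerivWithinAt.fderivWithin
      (hI_open.uniqueDiffWithinAt hx)
    rw [this]
    ext
    simp
  refine ⟨key, fun t ht t' ht' => ?_⟩
  have e : ∀ s ∈ I, σ₁ s ^ c₂ / σ₂ s ^ c₁ = Real.exp (F s) := by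
    intro s hs
    rw [Real.rpow_def_of_pos (hpos₁ s hs), Real.rpow_def_of_pos (hpos₂ s hs),
      ← Real.exp_sub]
    rw [hF]
    ring_nf
  rw [e t ht, e t' ht', key t ht t' ht']
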